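/- The set {x^i f_k(x,y,z) : i, k ≥ 0} ∪ {x^j (y^l - Σ_{s=0}^{l} binom(l,s) x^s) f_{md-1}(x,y,z) : j ≥ 0, l ≥ 1, m ≥ 1} is a ℤ-basis of ℤ[x,y,z]. -/

import Mathlib

/-- The polynomials f_k(x,y,z) ∈ ℤ[x,y,z] (x = X 0, y = X 1, z = X 2) of
Definition 3.19, depending on d: f_0 = 1, f_1 = y, f_d = z,
f_{md+l} = y·f_{md+l-1} - x·f_{md+l-2} for m ≥ 0 and 1 ≤ l ≤ d-1, and
f_{(m+1)d} = z·f_{md} - x·f_{(m+1)d-2} - Σ_{i=2}^{d-1} x^i·f_{md-1} - x^d·f_{(m-1)d}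
for m ≥ 1. -/
noncomputable def f3 (d : ℕ) : ℕ → MvPolynomial (Fin 3) ℤ
  | 0 => 1
  | 1 => MvPolynomial.X 1
  | k + 2 =>
    if _h : (k + 2) % d = 0 then
      if k + 2 = d then MvPolynomial.X 2
      else
        MvPolynomial.X 2 * f3 d (k + 2 - d) - MvPolynomial.X 0 * f3 d k
          - (∑ i ∈ Finset.Icc 2 (d - 1), MvPolynomial.X 0 ^ i * f3 d (k + 2 - d - 1))
          - MvPolynomial.X 0 ^ d * f3 d (k + 2 - 2 * d)
    else MvPolynomial.X 1 * f3 d (k + 1) - MvPolynomial.X 0 * f3 d k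
  termination_by k => k
  decreasing_by
    all_goals
      first
        | omega
        | (have hd : d ≠ 0 := by rintro rfl; omega
           omega)

open MvPolynomial Finset

/-- The combined family of STATEMENT 9: the first component indexes
x^i f_k (i, k ≥ 0); the second indexes
x^j (y^l - Σ_{s=0}^{l} binom(l,s) x^s) f_{md-1} with j ≥ 0, l ≥ 1, m ≥ 1
(encoded as l = p.2.1 + 1, m = p.2.2 + 1). -/
noncomputable def famNine (d : ℕ) : (ℕ × ℕ) ⊕ (ℕ × ℕ × ℕ) → MvPolynomial (Fin 3) ℤ
  | Sum.inl p => X 0 ^ p.1 * f3 d p.2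
  | Sum.inr p =>
      X 0 ^ p.1 *
        (X 1 ^ (p.2.1 + 1) -
          ∑ s ∈ Finset.range (p.2.1 + 2), (C ((p.2.1 + 1).choose s : ℤ)) * X 0 ^ s) *
        f3 d ((p.2.2 + 1) * d - 1)

/-- weight of a monomial -/
def wt (d : ℕ) (σ : Fin 3 →₀ ℕ) : ℕ := σ 1 + d * σ 2

/-- leading monomial exponent of f3 d k -/
noncomputable def lmf (d k : ℕ) : Fin 3 →₀ ℕ := Finsupp.single 1 (k % d) + Finsupp.single 2 (k / d)

lemma wt_add (d : ℕ) (σ τ : Fin 3 →₀ ℕ) : wt d (σ + τ) = wt d σ + wt d τ := by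
  simp [wt, Finsupp.add_apply]; ring

lemma wt_single0 (d i : ℕ) : wt d (Finsupp.single 0 i) = 0 := by
  simp [wt, Finsupp.single_apply]

lemma wt_single1 (d a : ℕ) : wt d (Finsupp.single 1 a) = a := by
  simp [wt, Finsupp.single_apply]

lemma wt_single2 (d c : ℕ) : wt d (Finsupp.single 2 c) = d * c := by
  simp [wt, Finsupp.single_apply]

lemma wt_lmf (d k : ℕ) : wt d (lmf d k) = k := by
  simp [lmf, wt_add, wt_single1, wt_single2, Nat.mod_add_div]

/-- every monomial of p has weight < n -/
def Low (d n : ℕ) (p : MvPolynomial (Fin 3) ℤ) : Prop := ∀ σ ∈ p.support, wt d σ < n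

lemma Low.mono {d n m : ℕ} {p : MvPolynomial (Fin 3) ℤ} (h : Low d n p) (hnm : n ≤ m) :
    Low d m p := fun σ hσ => lt_of_lt_of_le (h σ hσ) hnm

lemma low_zero (d n : ℕ) : Low d n (0 : MvPolynomial (Fin 3) ℤ) := by
  intro σ hσ; simp at hσ

lemma Low.add {d n : ℕ} {p q : MvPolynomial (Fin 3) ℤ} (hp : Low d n p) (hq : Low d n q) :
    Low d n (p + q) := by
  intro σ hσ
  rcases Finset.mem_union.1 (MvPolynomial.support_add hσ) with h | h
  · exact hp σ h
  · exact hq σ h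

lemma Low.neg {d n : ℕ} {p : MvPolynomial (Fin 3) ℤ} (hp : Low d n p) : Low d n (-p) := by
  intro σ hσ; rw [MvPolynomial.support_neg] at hσ; exact hp σ hσ

lemma Low.sub {d n : ℕ} {p q : MvPolynomial (Fin 3) ℤ} (hp : Low d n p) (hq : Low d n q) :
    Low d n (p - q) := by
  rw [sub_eq_add_neg]; exact hp.add hq.neg

lemma Low.monomial_mul {d n : ℕ} {p : MvPolynomial (Fin 3) ℤ} (τ : Fin 3 →₀ ℕ) (c : ℤ)
    (hp : Low d n p) : Low d (wt d τ + n) (monomial τ c * p) := by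
  intro σ hσ
  have := MvPolynomial.support_mul _ _ hσ
  rw [Finset.mem_add] at this
  obtain ⟨τ', hτ', ρ, hρ, rfl⟩ := this
  have hτ'' : τ' = τ := by
    have := MvPolynomial.support_monomial_subset hτ'
    simpa using this
  subst hτ''
  rw [wt_add]
  exact Nat.add_lt_add_left (hp ρ hρ) _

lemma Low.sum {d n : ℕ} {ι : Type*} (s : Finset ι) (f : ι → MvPolynomial (Fin 3) ℤ)
    (h : ∀ i ∈ s, Low d n (f i)) : Low d n (∑ i ∈ s, f i) := by
  classical
  induction s using Finset.induction_on with
  | empty => simpa using low_zero d n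
  | insert _ _ hx ih =>
    rw [Finset.sum_insert hx]
    exact (h _ (Finset.mem_insert_self _ _)).add
      (ih fun i hi => h i (Finset.mem_insert_of_mem hi))

lemma low_monomial {d n : ℕ} (τ : Fin 3 →₀ ℕ) (c : ℤ) (h : wt d τ < n) :
    Low d n (monomial τ c) := by
  intro σ hσ
  have := MvPolynomial.support_monomial_subset hσ
  simp at this; subst this; exact h

lemma f3_eq (d : ℕ) (hd : 2 ≤ d) (k : ℕ) :
    f3 d k = monomial (lmf d k) 1 + (f3 d k - monomial (lmf d k) 1) := by ring

lemma hX0eq : (X 0 : MvPolynomial (Fin 3) ℤ) = monomial (Finsupp.single 0 1) 1 := rfl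
lemma hX1eq : (X 1 : MvPolynomial (Fin 3) ℤ) = monomial (Finsupp.single 1 1) 1 := rfl
lemma hX2eq : (X 2 : MvPolynomial (Fin 3) ℤ) = monomial (Finsupp.single 2 1) 1 := rfl

lemma f3_struct (d : ℕ) (hd : 2 ≤ d) (k : ℕ) :
    Low d k (f3 d k - monomial (lmf d k) 1) := by
  induction k using Nat.strong_induction_on with
  | _ k IH =>
  have flow : ∀ j, j < k → Low d (j + 1) (f3 d j) := by
    intro j hj
    rw [f3_eq d hd j]
    exact (low_monomial _ _ (by rw [wt_lmf]; omega)).add ((IH j hj).mono (by omega))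
  rcases Nat.lt_or_ge k 2 with hk | hk
  · interval_cases k
    · have h0 : lmf d 0 = 0 := by simp [lmf]
      rw [h0, show f3 d 0 = 1 by rw [f3]]
      rw [show ((monomial (0 : Fin 3 →₀ ℕ)) (1:ℤ)) = 1 by simp [MvPolynomial.monomial_zero']]
      simpa using low_zero d 0
    · have h1 : lmf d 1 = Finsupp.single 1 1 := by
        simp [lmf, Nat.mod_eq_of_lt (by omega : 1 < d), Nat.div_eq_of_lt (by omega : 1 < d)]
      rw [h1, show f3 d 1 = X 1 by rw [f3], hX1eq]
      simpa using low_zero d 1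
  · obtain ⟨k, rfl⟩ : ∃ k', k = k' + 2 := ⟨k - 2, by omega⟩
    rw [f3]
    split_ifs with h1 h2
    · -- k + 2 = d
      have h0 : lmf d (k + 2) = Finsupp.single 2 1 := by
        simp [lmf, h1, h2, Nat.div_self (by omega : 0 < d)]
      rw [h0, hX2eq]
      simpa using low_zero d (k + 2)
    · -- divisible, ≥ 2d
      obtain ⟨q, hq⟩ : d ∣ (k + 2) := Nat.dvd_of_mod_eq_zero h1
      obtain ⟨q', rfl⟩ : ∃ q', q = q' + 2 := by
        refine ⟨q - 2, ?_⟩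
        rcases q with _ | _ | q
        · omega
        · omega
        · rfl
      have hd0 : 0 < d := by omega
      have hexp : d * (q' + 2) = d * q' + 2 * d := by ring
      have hA : k + 2 - d = d * q' + d := by omega
      have hB : k + 2 - 2 * d = d * q' := by omega
      have hAd : k + 2 - d = d * (q' + 1) := by rw [hA]; ring
      have hlm2 : lmf d (k + 2) = Finsupp.single 2 (q' + 2) := by
        simp [lmf, h1, hq, Nat.mul_div_cancel_left _ hd0]
      have hlm1 : lmf d (k + 2 - d) = Finsupp.single 2 (q' + 1) := by
        rw [hAd]
        simp [lmf, Nat.mul_mod_right, Nat.mul_div_cancel_left _ hd0]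
      have hmul : (monomial (Finsupp.single 2 1) (1:ℤ)) * monomial (lmf d (k + 2 - d)) 1
          = monomial (lmf d (k + 2)) 1 := by
        have e : 1 + (q' + 1) = q' + 2 := by omega
        rw [monomial_mul, hlm1, hlm2, ← Finsupp.single_add, one_mul, e]
      have key : X 2 * f3 d (k + 2 - d) - monomial (lmf d (k + 2)) 1
          = monomial (Finsupp.single 2 1) 1 * (f3 d (k + 2 - d) - monomial (lmf d (k + 2 - d)) 1) := by
        rw [hX2eq, mul_sub, hmul]
      have grr : X 2 * f3 d (k + 2 - d) - X 0 * f3 d k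
          - (∑ i ∈ Finset.Icc 2 (d - 1), X 0 ^ i * f3 d (k + 2 - d - 1))
          - X 0 ^ d * f3 d (k + 2 - 2 * d) - monomial (lmf d (k + 2)) 1
          = (X 2 * f3 d (k + 2 - d) - monomial (lmf d (k + 2)) 1) - X 0 * f3 d k
          - (∑ i ∈ Finset.Icc 2 (d - 1), X 0 ^ i * f3 d (k + 2 - d - 1))
          - X 0 ^ d * f3 d (k + 2 - 2 * d) := by ring
      rw [grr, key]
      refine ((((Low.monomial_mul _ _ (IH (k + 2 - d) (by omega))).mono ?_).sub ?_).sub ?_).sub ?_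
      · rw [wt_single2]; omega
      · rw [hX0eq]
        exact (Low.monomial_mul _ _ (flow k (by omega))).mono (by rw [wt_single0]; omega)
      · refine Low.sum _ _ fun i hi => ?_
        rw [X_pow_eq_monomial]
        exact (Low.monomial_mul _ _ (flow (k + 2 - d - 1) (by omega))).mono
          (by rw [wt_single0]; omega)
      · rw [X_pow_eq_monomial]
        exact (Low.monomial_mul _ _ (flow (k + 2 - 2 * d) (by omega))).mono
          (by rw [wt_single0]; omega)
    · -- not divisible
      have hnd : ¬ d ∣ (k + 2) := by
        rw [Nat.dvd_iff_mod_eq_zero]; exact h1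
      have hdiv : (k + 2) / d = (k + 1) / d := by
        rw [show k + 2 = (k + 1) + 1 from rfl, Nat.succ_div, if_neg hnd]
        omega
      have hmod : (k + 2) % d = (k + 1) % d + 1 := by
        have e1 := Nat.mod_add_div (k + 1) d
        have e2 := Nat.mod_add_div (k + 2) d
        rw [hdiv] at e2
        omega
      have hlm : lmf d (k + 2) = Finsupp.single 1 1 + lmf d (k + 1) := by
        unfold lmf
        rw [hmod, hdiv, show (k+1) % d + 1 = 1 + (k+1) % d by omega, Finsupp.single_add, add_assoc]
      have hmul : (monomial (Finsupp.single 1 1) (1:ℤ)) * monomial (lmf d (k + 1)) 1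
          = monomial (lmf d (k + 2)) 1 := by
        rw [monomial_mul, hlm, one_mul]
      have key : X 1 * f3 d (k + 1) - monomial (lmf d (k + 2)) 1
          = monomial (Finsupp.single 1 1) 1 * (f3 d (k + 1) - monomial (lmf d (k + 1)) 1) := by
        rw [hX1eq, mul_sub, hmul]
      have grr : X 1 * f3 d (k + 1) - X 0 * f3 d k - monomial (lmf d (k + 2)) 1
          = (X 1 * f3 d (k + 1) - monomial (lmf d (k + 2)) 1) - X 0 * f3 d k := by ring
      rw [grr, key]
      refine ((Low.monomial_mul _ _ (IH (k + 1) (by omega))).mono ?_).sub ?_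
      · rw [wt_single1]; omega
      · rw [hX0eq]
        exact (Low.monomial_mul _ _ (flow k (by omega))).mono (by rw [wt_single0]; omega)


lemma f3_low (d : ℕ) (hd : 2 ≤ d) (k : ℕ) : Low d (k + 1) (f3 d k) := by
  rw [f3_eq d hd k]
  exact (low_monomial _ _ (by rw [wt_lmf]; omega)).add ((f3_struct d hd k).mono (by omega))

example : True := trivial

lemma wt_zero (d : ℕ) : wt d (0 : Fin 3 →₀ ℕ) = 0 := by simp [wt]

lemma low_Cmul {d n : ℕ} {p : MvPolynomial (Fin 3) ℤ} (c : ℤ) (h : Low d n p) :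
    Low d n (C c * p) := by
  rw [show (C c : MvPolynomial (Fin 3) ℤ) = monomial 0 c from rfl]
  exact (Low.monomial_mul _ _ h).mono (by rw [wt_zero]; omega)

lemma low_Xpow_mul {d n : ℕ} {p : MvPolynomial (Fin 3) ℤ} (i : ℕ) (h : Low d n p) :
    Low d n (X 0 ^ i * p) := by
  rw [X_pow_eq_monomial]
  exact (Low.monomial_mul _ _ h).mono (by rw [wt_single0]; omega)

/-- leading monomials of the family -/
noncomputable def mu (d : ℕ) : (ℕ × ℕ) ⊕ (ℕ × ℕ × ℕ) → (Fin 3 →₀ ℕ)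
  | Sum.inl (i, k) => Finsupp.single 0 i + Finsupp.single 1 (k % d) + Finsupp.single 2 (k / d)
  | Sum.inr (j, l, m) => Finsupp.single 0 j + Finsupp.single 1 (l + d) + Finsupp.single 2 m

lemma mu_inl (d i k : ℕ) : mu d (Sum.inl (i, k)) = Finsupp.single 0 i + lmf d k := by
  show _ = Finsupp.single 0 i + (Finsupp.single 1 (k % d) + Finsupp.single 2 (k / d))
  rw [mu, add_assoc]

lemma fin3_decomp (σ : Fin 3 →₀ ℕ) :
    σ = Finsupp.single 0 (σ 0) + Finsupp.single 1 (σ 1) + Finsupp.single 2 (σ 2) := by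
  ext a
  fin_cases a <;> simp [Finsupp.single_apply, Fin.ext_iff]

lemma triple_apply0 (a b c : ℕ) :
    (Finsupp.single (0 : Fin 3) a + Finsupp.single 1 b + Finsupp.single 2 c : Fin 3 →₀ ℕ) 0 = a := by
  simp [Finsupp.single_apply, Fin.ext_iff]

lemma triple_apply1 (a b c : ℕ) :
    (Finsupp.single (0 : Fin 3) a + Finsupp.single 1 b + Finsupp.single 2 c : Fin 3 →₀ ℕ) 1 = b := by
  simp [Finsupp.single_apply, Fin.ext_iff]

lemma triple_apply2 (a b c : ℕ) :
    (Finsupp.single (0 : Fin 3) a + Finsupp.single 1 b + Finsupp.single 2 c : Fin 3 →₀ ℕ) 2 = c := by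
  simp [Finsupp.single_apply, Fin.ext_iff]

lemma triple_inj {a b c a' b' c' : ℕ}
    (h : Finsupp.single (0 : Fin 3) a + Finsupp.single 1 b + Finsupp.single 2 c
       = Finsupp.single (0 : Fin 3) a' + Finsupp.single 1 b' + Finsupp.single 2 c') :
    a = a' ∧ b = b' ∧ c = c' := by
  refine ⟨?_, ?_, ?_⟩
  · have := congrArg (fun f : Fin 3 →₀ ℕ => f 0) h
    simpa [triple_apply0] using this
  · have := congrArg (fun f : Fin 3 →₀ ℕ => f 1) h
    simpa [triple_apply1] using this
  · have := congrArg (fun f : Fin 3 →₀ ℕ => f 2) h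
    simpa [triple_apply2] using this

lemma mu_injective (d : ℕ) (hd : 2 ≤ d) : Function.Injective (mu d) := by
  intro idx idx' h
  have hd0 : 0 < d := by omega
  cases idx with
  | inl p =>
    obtain ⟨i, k⟩ := p
    cases idx' with
    | inl p' =>
      obtain ⟨i', k'⟩ := p'
      rw [mu, mu] at h
      obtain ⟨h0, h1, h2⟩ := triple_inj h
      have e1 := Nat.mod_add_div k d
      have e2 := Nat.mod_add_div k' d
      rw [h1, h2] at e1
      simp only [Sum.inl.injEq, Prod.mk.injEq]
      omega
    | inr p' =>
      obtain ⟨j, l, m⟩ := p'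
      rw [mu, mu] at h
      obtain ⟨h0, h1, h2⟩ := triple_inj h
      have := Nat.mod_lt k hd0
      exfalso; omega
  | inr p =>
    obtain ⟨j, l, m⟩ := p
    cases idx' with
    | inl p' =>
      obtain ⟨i', k'⟩ := p'
      rw [mu, mu] at h
      obtain ⟨h0, h1, h2⟩ := triple_inj h
      have := Nat.mod_lt k' hd0
      exfalso; omega
    | inr p' =>
      obtain ⟨j', l', m'⟩ := p'
      rw [mu, mu] at h
      obtain ⟨h0, h1, h2⟩ := triple_inj h
      simp only [Sum.inr.injEq, Prod.mk.injEq]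
      omega

lemma mu_surjective (d : ℕ) (hd : 2 ≤ d) : Function.Surjective (mu d) := by
  intro σ
  have hd0 : 0 < d := by omega
  by_cases h : σ 1 < d
  · refine ⟨Sum.inl (σ 0, d * σ 2 + σ 1), ?_⟩
    rw [mu]
    have hmod : (d * σ 2 + σ 1) % d = σ 1 := by
      rw [Nat.mul_add_mod, Nat.mod_eq_of_lt h]
    have hdiv : (d * σ 2 + σ 1) / d = σ 2 := by
      rw [Nat.mul_add_div hd0, Nat.div_eq_of_lt h]
      omega
    rw [hmod, hdiv, ← fin3_decomp]
  · refine ⟨Sum.inr (σ 0, σ 1 - d, σ 2), ?_⟩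
    rw [mu]
    have : σ 1 - d + d = σ 1 := by omega
    rw [this, ← fin3_decomp]

lemma fam_struct (d : ℕ) (hd : 2 ≤ d) :
    ∀ idx, Low d (wt d (mu d idx)) (famNine d idx - monomial (mu d idx) 1) := by
  rintro (⟨i, k⟩ | ⟨j, l, m⟩)
  · have hmu : mu d (Sum.inl (i, k)) = Finsupp.single 0 i + lmf d k := mu_inl d i k
    have hw : wt d (mu d (Sum.inl (i, k))) = k := by
      rw [hmu, wt_add, wt_single0, wt_lmf]; omega
    have key : famNine d (Sum.inl (i, k)) - monomial (mu d (Sum.inl (i, k))) 1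
        = monomial (Finsupp.single 0 i) 1 * (f3 d k - monomial (lmf d k) 1) := by
      rw [show famNine d (Sum.inl (i, k)) = X 0 ^ i * f3 d k from rfl,
        X_pow_eq_monomial, mul_sub, monomial_mul, one_mul, hmu]
    rw [key, hw]
    exact (Low.monomial_mul _ _ (f3_struct d hd k)).mono (by rw [wt_single0]; omega)
  · set M := (m + 1) * d - 1 with hMdef
    have hd0 : 0 < d := by omega
    have hMe : M = d * m + (d - 1) := by
      have : (m + 1) * d = d * m + d := by ring
      omega
    have hMmod : M % d = d - 1 := by
      rw [hMe, Nat.mul_add_mod, Nat.mod_eq_of_lt (by omega)]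
    have hMdiv : M / d = m := by
      rw [hMe, Nat.mul_add_div hd0, Nat.div_eq_of_lt (by omega)]; omega
    have hlmfM : lmf d M = Finsupp.single 1 (d - 1) + Finsupp.single 2 m := by
      unfold lmf; rw [hMmod, hMdiv]
    have hmu : mu d (Sum.inr (j, l, m))
        = Finsupp.single 0 j + Finsupp.single 1 (l + d) + Finsupp.single 2 m := by rw [mu]
    have hw : wt d (mu d (Sum.inr (j, l, m))) = l + d + d * m := by
      rw [hmu, wt_add, wt_add, wt_single0, wt_single1, wt_single2]; omega
    have hfs : Finsupp.single (0 : Fin 3) j + Finsupp.single 1 (l + 1)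
          + (Finsupp.single 1 (d - 1) + Finsupp.single 2 m)
        = Finsupp.single (0 : Fin 3) j + Finsupp.single 1 (l + d) + Finsupp.single 2 m := by
      ext a; fin_cases a <;> simp [Finsupp.single_apply, Fin.ext_iff] <;> omega
    have hBmul : (monomial (Finsupp.single 0 j) (1:ℤ)) * monomial (Finsupp.single 1 (l + 1)) 1
        * monomial (lmf d M) 1 = monomial (mu d (Sum.inr (j, l, m))) 1 := by
      rw [monomial_mul, monomial_mul, hlmfM, hmu, one_mul, hfs]
      norm_num
    have key : famNine d (Sum.inr (j, l, m)) - monomial (mu d (Sum.inr (j, l, m))) 1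
        = monomial (Finsupp.single 0 j) 1 * monomial (Finsupp.single 1 (l + 1)) 1
            * (f3 d M - monomial (lmf d M) 1)
          - X 0 ^ j * (∑ s ∈ Finset.range (l + 2), (C ((l + 1).choose s : ℤ)) * X 0 ^ s)
            * f3 d M := by
      rw [show famNine d (Sum.inr (j, l, m)) = X 0 ^ j
          * (X 1 ^ (l + 1) - ∑ s ∈ Finset.range (l + 2), (C ((l + 1).choose s : ℤ)) * X 0 ^ s)
          * f3 d M from rfl]
      rw [show (X 0 : MvPolynomial (Fin 3) ℤ) ^ j = monomial (Finsupp.single 0 j) 1 from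
            X_pow_eq_monomial,
          show (X 1 : MvPolynomial (Fin 3) ℤ) ^ (l + 1) = monomial (Finsupp.single 1 (l + 1)) 1
            from X_pow_eq_monomial]
      linear_combination hBmul
    rw [key, hw]
    refine Low.sub ?_ ?_
    · rw [monomial_mul]
      refine (Low.monomial_mul _ _ (f3_struct d hd M)).mono ?_
      rw [wt_add, wt_single0, wt_single1]
      omega
    · rw [Finset.mul_sum, Finset.sum_mul]
      refine Low.sum _ _ fun s hs => ?_
      have e : X 0 ^ j * (C ((l + 1).choose s : ℤ) * X 0 ^ s) * f3 d M
          = X 0 ^ j * (C ((l + 1).choose s : ℤ) * (X 0 ^ s * f3 d M)) := by ring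
      rw [e]
      exact low_Xpow_mul _ (low_Cmul _ (low_Xpow_mul _ ((f3_low d hd M).mono (by omega))))

lemma fam_coeff (d : ℕ) (hd : 2 ≤ d) (idx) : coeff (mu d idx) (famNine d idx) = 1 := by
  have h := fam_struct d hd idx
  have e : famNine d idx = monomial (mu d idx) 1 + (famNine d idx - monomial (mu d idx) 1) := by
    ring
  rw [e, coeff_add, coeff_monomial, if_pos rfl]
  have : coeff (mu d idx) (famNine d idx - monomial (mu d idx) 1) = 0 := by
    rw [← MvPolynomial.notMem_support_iff]
    intro hmem
    exact absurd (h _ hmem) (lt_irrefl _)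
  rw [this]; ring

lemma fam_coeff_ne (d : ℕ) (hd : 2 ≤ d) (idx) (σ : Fin 3 →₀ ℕ) (hne : σ ≠ mu d idx)
    (hw : wt d (mu d idx) ≤ wt d σ) : coeff σ (famNine d idx) = 0 := by
  have h := fam_struct d hd idx
  have e : famNine d idx = monomial (mu d idx) 1 + (famNine d idx - monomial (mu d idx) 1) := by
    ring
  rw [e, coeff_add, coeff_monomial, if_neg (fun h' => hne h'.symm)]
  have : coeff σ (famNine d idx - monomial (mu d idx) 1) = 0 := by
    rw [← MvPolynomial.notMem_support_iff]
    intro hmem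
    exact absurd (h _ hmem) (by omega)
  rw [this]; ring

lemma monomial_mem_span (d : ℕ) (hd : 2 ≤ d) :
    ∀ (n : ℕ) (σ : Fin 3 →₀ ℕ) (c : ℤ), wt d σ = n →
      monomial σ c ∈ Submodule.span ℤ (Set.range (famNine d)) := by
  intro n
  induction n using Nat.strong_induction_on with
  | _ n IH =>
  intro σ c hσ
  obtain ⟨idx, hidx⟩ := mu_surjective d hd σ
  have hstruct := fam_struct d hd idx
  rw [hidx] at hstruct
  set E := famNine d idx - monomial σ 1 with hE
  have hEmem : E ∈ Submodule.span ℤ (Set.range (famNine d)) := by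
    rw [MvPolynomial.as_sum E]
    exact Submodule.sum_mem _ fun τ hτ =>
      IH (wt d τ) (by rw [← hσ]; exact hstruct τ hτ) τ _ rfl
  have hkey : monomial σ c = c • famNine d idx - c • E := by
    rw [← smul_sub, show famNine d idx - E = monomial σ 1 by rw [hE]; ring, smul_monomial]
    norm_num
  rw [hkey]
  exact sub_mem (Submodule.smul_mem _ _ (Submodule.subset_span ⟨idx, rfl⟩))
    (Submodule.smul_mem _ _ hEmem)

/-- {x^i f_k : i,k ≥ 0} ∪
{x^j (y^l - Σ_{s=0}^l binom(l,s) x^s) f_{md-1} : j ≥ 0, l,m ≥ 1} is a ℤ-basis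
of ℤ[x,y,z]. -/
theorem famNine_basis (d : ℕ) (hd : 2 ≤ d) :
    LinearIndependent ℤ (famNine d) ∧
    Submodule.span ℤ (Set.range (famNine d)) = ⊤ := by
  constructor
  · rw [linearIndependent_iff]
    intro l hl
    by_contra hne
    have hsupp : l.support.Nonempty := Finsupp.support_nonempty_iff.2 hne
    obtain ⟨idx₀, h0mem, hmax⟩ :=
      Finset.exists_max_image l.support (fun idx => wt d (mu d idx)) hsupp
    have hc : coeff (mu d idx₀) (Finsupp.linearCombination ℤ (famNine d) l) = l idx₀ := by
      rw [Finsupp.linearCombination_apply, Finsupp.sum, coeff_sum]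
      rw [Finset.sum_eq_single idx₀]
      · rw [coeff_smul, fam_coeff d hd idx₀]
        simp
      · intro idx hmem hne'
        rw [coeff_smul,
          fam_coeff_ne d hd idx _ ((mu_injective d hd).ne hne'.symm) (hmax idx hmem)]
        simp
      · intro h
        exact (h h0mem).elim
    rw [hl] at hc
    simp only [coeff_zero] at hc
    exact (Finsupp.mem_support_iff.1 h0mem) hc.symm
  · rw [eq_top_iff]
    intro p _
    rw [MvPolynomial.as_sum p]
    exact Submodule.sum_mem _ fun τ hτ => monomial_mem_span d hd (wt d τ) τ _ rfl
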